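/- Let A be a ring with property (SF), let Q be a k×m matrix over A, and let M be a right A-submodule of A^k containing the column space R_Q. Suppose F is a k×t matrix and F' is a k×t' matrix over A such that the columns of F form a right basis of a finitely generated submodule M₁ ≤ M which is a free factor of M and contains R_Q, and the columns of F' form a right basis of a finitely generated submodule M₂ ≤ M which is a free factor of M and contains R_Q. Let B (of size t×m) and B' (of size t'×m) be matrices with Q = F·B and Q = F'·B'. Then the left A-submodule of A^m generated by the rows of B equals the left A-submodule generated by the rows of B'. -/

import Mathlib

universe u v

/-- Property (SF): every submodule of every free `A`-module is a free `A`-module. -/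
def HasSF (A : Type u) [Ring A] : Prop :=
  ∀ (M : Type v) [AddCommGroup M] [Module A M], Module.Free A M →
    ∀ N : Submodule A M, Module.Free A ↥N

/-- `M` is a free factor of `N` (written `M ≤* N`): `M ≤ N` and there is a submodule
`M' ≤ N` with `M ⊓ M' = ⊥` and `M ⊔ M' = N` such that `M'` is a free module. -/
def IsFreeFactor {A : Type*} [Ring A] {P : Type*} [AddCommGroup P] [Module A P]
    (M N : Submodule A P) : Prop :=
  M ≤ N ∧ ∃ M' : Submodule A P, M' ≤ N ∧ M ⊓ M' = ⊥ ∧ M ⊔ M' = N ∧ Module.Free A ↥M'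

/-- The extension `M ≤ N` is algebraic: the only submodule `L` with `M ≤ L ≤ N`
which is a free factor of `N` is `L = N`. -/
def IsAlgExt {A : Type*} [Ring A] {P : Type*} [AddCommGroup P] [Module A P]
    (M N : Submodule A P) : Prop :=
  M ≤ N ∧ ∀ L : Submodule A P, M ≤ L → IsFreeFactor L N → L = N

/-- The column space of a matrix `Q`: the right `A`-submodule (i.e. `Aᵐᵒᵖ`-submodule)
of `A^k` generated by the columns of `Q`. -/
def colSpace {A : Type u} [Ring A] {k m : ℕ} (Q : Matrix (Fin k) (Fin m) A) :
    Submodule Aᵐᵒᵖ (Fin k → A) :=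
  Submodule.span Aᵐᵒᵖ (Set.range fun j => fun i => Q i j)

/-- The row space of a matrix `Q`: the left `A`-submodule of `A^m` generated by the
rows of `Q`. -/
def rowSpace {A : Type u} [Ring A] {k m : ℕ} (Q : Matrix (Fin k) (Fin m) A) :
    Submodule A (Fin m → A) :=
  Submodule.span A (Set.range fun i => fun j => Q i j)

theorem rowSpace_le_aux {A : Type u} [Ring A] {k m t t' : ℕ}
    (Q : Matrix (Fin k) (Fin m) A) (M : Submodule Aᵐᵒᵖ (Fin k → A))
    (F : Matrix (Fin k) (Fin t) A) (F' : Matrix (Fin k) (Fin t') A)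
    (hFind : LinearIndependent Aᵐᵒᵖ (fun j => fun i => F i j))
    (hQF : colSpace Q ≤ colSpace F) (hFff : IsFreeFactor (colSpace F) M)
    (hF'le : colSpace F' ≤ M)
    (B : Matrix (Fin t) (Fin m) A) (B' : Matrix (Fin t') (Fin m) A)
    (hB : Q = F * B) (hB' : Q = F' * B') :
    rowSpace B ≤ rowSpace B' := by
  classical
  obtain ⟨hle, N₂, hN₂le, hinf, hsup, -⟩ := hFff
  set N₁' : Submodule Aᵐᵒᵖ ↥M := (colSpace F).comap M.subtype with hN₁'
  set N₂' : Submodule Aᵐᵒᵖ ↥M := N₂.comap M.subtype with hN₂'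
  have hcompl : IsCompl N₁' N₂' := by
    constructor
    · rw [disjoint_iff]
      ext x
      simp only [Submodule.mem_inf, Submodule.mem_comap, Submodule.mem_bot]
      constructor
      · rintro ⟨h1, h2⟩
        have : (x : Fin k → A) ∈ colSpace F ⊓ N₂ := ⟨h1, h2⟩
        rw [hinf, Submodule.mem_bot] at this
        exact Subtype.ext this
      · rintro rfl; simp
    · rw [codisjoint_iff]
      ext x
      simp only [Submodule.mem_top, iff_true]
      have hx : (x : Fin k → A) ∈ colSpace F ⊔ N₂ := by rw [hsup]; exact x.2
      rw [Submodule.mem_sup] at hx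
      obtain ⟨y, hy, z, hz, hyz⟩ := hx
      rw [Submodule.mem_sup]
      refine ⟨⟨y, hle hy⟩, hy, ⟨z, hN₂le hz⟩, hz, ?_⟩
      exact Subtype.ext hyz
  set π := N₁'.linearProjOfIsCompl N₂' hcompl with hπ
  set e := Submodule.comapSubtypeEquivOfLe hle with he
  set b : Module.Basis (Fin t) Aᵐᵒᵖ ↥(colSpace F) := Module.Basis.span hFind with hb
  set ψ : Fin t → (↥M →ₗ[Aᵐᵒᵖ] Aᵐᵒᵖ) :=
    fun i => (b.coord i) ∘ₗ (e.toLinearMap ∘ₗ π) with hψ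
  -- ψ i fixes elements of colSpace F
  have hψmem : ∀ (i : Fin t) (x : Fin k → A) (hx : x ∈ colSpace F) (hxM : x ∈ M),
      ψ i ⟨x, hxM⟩ = b.coord i ⟨x, hx⟩ := by
    intro i x hx hxM
    have h1 : π ⟨x, hxM⟩ = ⟨⟨x, hxM⟩, hx⟩ :=
      Submodule.linearProjOfIsCompl_apply_left hcompl ⟨⟨x, hxM⟩, hx⟩
    simp only [hψ, LinearMap.comp_apply, h1, LinearEquiv.coe_coe]
    congr 1
  -- columns
  have hQcol : ∀ l : Fin m, (fun i => Q i l) ∈ colSpace F := fun l =>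
    hQF (Submodule.subset_span ⟨l, rfl⟩)
  have hF'col : ∀ s : Fin t', (fun i => F' i s) ∈ M := fun s =>
    hF'le (Submodule.subset_span ⟨s, rfl⟩)
  -- the F-expansion of columns of Q
  have hQexp : ∀ l : Fin m,
      (⟨(fun i => Q i l), hQcol l⟩ : ↥(colSpace F)) =
        ∑ j : Fin t, MulOpposite.op (B j l) • b j := by
    intro l
    apply Subtype.ext
    push_cast
    funext i
    simp only [hb, Module.Basis.span_apply, Finset.sum_apply, Pi.smul_apply, op_smul_eq_mul]
    rw [hB]
    simp only [Matrix.mul_apply]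
    refine Finset.sum_congr rfl fun x _ => ?_
    congr 1
    exact (congrFun (congrArg Subtype.val (Module.Basis.span_apply hFind x)) i).symm
  have hcoord : ∀ (i : Fin t) (l : Fin m),
      b.coord i ⟨(fun r => Q r l), hQcol l⟩ = MulOpposite.op (B i l) := by
    intro i l
    rw [hQexp l]
    simp [Module.Basis.coord_apply, map_sum, Module.Basis.repr_self, Finsupp.single_apply,
      Finset.sum_ite_eq']
  -- the F'-expansion of columns of Q, inside M
  have hQexp' : ∀ l : Fin m,
      (⟨(fun r => Q r l), hle (hQcol l)⟩ : ↥M) =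
        ∑ s : Fin t', MulOpposite.op (B' s l) • (⟨(fun r => F' r s), hF'col s⟩ : ↥M) := by
    intro l
    apply Subtype.ext
    push_cast
    funext i
    simp only [Finset.sum_apply, Pi.smul_apply, op_smul_eq_mul]
    rw [hB']
    simp [Matrix.mul_apply]
  -- main coefficient identity
  have hmain : ∀ (i : Fin t) (l : Fin m),
      B i l = ∑ s : Fin t',
        MulOpposite.unop (ψ i ⟨(fun r => F' r s), hF'col s⟩) * B' s l := by
    intro i l
    have h1 : ψ i ⟨(fun r => Q r l), hle (hQcol l)⟩ = MulOpposite.op (B i l) := by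
      rw [hψmem i _ (hQcol l), hcoord]
    rw [hQexp' l] at h1
    simp only [map_sum, map_smul, smul_eq_mul] at h1
    have h2 := congrArg MulOpposite.unop h1
    rw [Finset.unop_sum] at h2
    simp only [MulOpposite.unop_mul, MulOpposite.unop_op] at h2
    exact h2.symm
  -- conclude
  rw [rowSpace, Submodule.span_le]
  rintro _ ⟨i, rfl⟩
  have hrow : (fun l => B i l) = ∑ s : Fin t',
      (MulOpposite.unop (ψ i ⟨(fun r => F' r s), hF'col s⟩)) • (fun l => B' s l) := by
    funext l
    rw [hmain i l]
    simp [Finset.sum_apply, smul_eq_mul]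
  show (fun l => B i l) ∈ rowSpace B'
  rw [hrow]
  exact Submodule.sum_mem _ fun s _ =>
    Submodule.smul_mem _ _ (Submodule.subset_span ⟨s, rfl⟩)

theorem qDual_well_defined {A : Type u} [Ring A]
    (hSF : HasSF.{u, u} A) (hSFop : HasSF.{u, u} Aᵐᵒᵖ)
    {k m t t' : ℕ} (Q : Matrix (Fin k) (Fin m) A)
    (M : Submodule Aᵐᵒᵖ (Fin k → A)) (hQM : colSpace Q ≤ M)
    (F : Matrix (Fin k) (Fin t) A) (F' : Matrix (Fin k) (Fin t') A)
    (hFind : LinearIndependent Aᵐᵒᵖ (fun j => fun i => F i j))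
    (hF'ind : LinearIndependent Aᵐᵒᵖ (fun j => fun i => F' i j))
    (hQF : colSpace Q ≤ colSpace F) (hFff : IsFreeFactor (colSpace F) M)
    (hQF' : colSpace Q ≤ colSpace F') (hF'ff : IsFreeFactor (colSpace F') M)
    (B : Matrix (Fin t) (Fin m) A) (B' : Matrix (Fin t') (Fin m) A)
    (hB : Q = F * B) (hB' : Q = F' * B') :
    rowSpace B = rowSpace B' :=
  le_antisymm
    (rowSpace_le_aux Q M F F' hFind hQF hFff hF'ff.1 B B' hB hB')
    (rowSpace_le_aux Q M F' F hF'ind hQF' hF'ff hFff.1 B' B hB' hB)
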